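/- Let G be a finite simple graph on an even number of vertices that admits a join. Then V(G) can be partitioned into three (possibly empty) odd sets; in particular the odd chromatic number of G is at most 3. -/

import Mathlib

open Matrix Finset

/-- A set `S` of vertices of `G` is *odd* if every vertex of `S` has an odd number of
neighbors inside `S`. -/
def SimpleGraph.IsOddSet {V : Type*} (G : SimpleGraph V) (S : Set V) : Prop :=
  ∀ v ∈ S, Odd (S ∩ G.neighborSet v).ncard



section helpers
lemma zmod2_cases : ∀ a : ZMod 2, a = 0 ∨ a = 1 := by decide
lemma zmod2_sq : ∀ a : ZMod 2, a * a = a := by decide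
lemma zmod2_addself : ∀ a : ZMod 2, a + a = 0 := by decide
end helpers


/-- Solvability of `M x = d` for symmetric `M` when `d` is orthogonal to `ker M`. -/
lemma exists_solution {W : Type*} [Fintype W] [DecidableEq W]
    (M : Matrix W W (ZMod 2)) (hsym : Mᵀ = M) (d : W → ZMod 2)
    (hd : ∀ z, M *ᵥ z = 0 → d ⬝ᵥ z = 0) : ∃ x, M *ᵥ x = d := by
  classical
  set B : LinearMap.BilinForm (ZMod 2) (W → ZMod 2) :=
    Matrix.toBilin' (1 : Matrix W W (ZMod 2)) with hB
  have hBapp : ∀ x y : W → ZMod 2, B x y = x ⬝ᵥ y := by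
    intro x y; rw [hB, Matrix.toBilin'_apply', Matrix.one_mulVec]
  have hBrefl : B.IsRefl := by
    intro x y h; rwa [hBapp, dotProduct_comm, ← hBapp]
  have hBnd : B.Nondegenerate := by
    rw [hB, Matrix.nondegenerate_toBilin'_iff, Matrix.nondegenerate_iff_det_ne_zero]
    simp
  set L := M.mulVecLin with hL
  have hle : LinearMap.range L ≤ B.orthogonal (LinearMap.ker L) := by
    rintro _ ⟨x, rfl⟩ n hn
    have hn' : M *ᵥ n = 0 := hn
    show B n (L x) = 0
    rw [hBapp]
    show n ⬝ᵥ (M *ᵥ x) = 0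
    rw [Matrix.dotProduct_mulVec, ← Matrix.mulVec_transpose, hsym, hn', zero_dotProduct]
  have hrank : Module.finrank (ZMod 2) (LinearMap.range L) +
      Module.finrank (ZMod 2) (LinearMap.ker L) = Module.finrank (ZMod 2) (W → ZMod 2) :=
    LinearMap.finrank_range_add_finrank_ker L
  have horth : Module.finrank (ZMod 2) (B.orthogonal (LinearMap.ker L)) =
      Module.finrank (ZMod 2) (W → ZMod 2) - Module.finrank (ZMod 2) (LinearMap.ker L) :=
    LinearMap.BilinForm.finrank_orthogonal hBnd _
  have hker_le : Module.finrank (ZMod 2) (LinearMap.ker L) ≤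
      Module.finrank (ZMod 2) (W → ZMod 2) := Submodule.finrank_le _
  have heq : LinearMap.range L = B.orthogonal (LinearMap.ker L) :=
    Submodule.eq_of_le_of_finrank_le hle (by omega)
  have hdmem : d ∈ B.orthogonal (LinearMap.ker L) := by
    intro n hn
    show B n d = 0
    rw [hBapp, dotProduct_comm]
    exact hd n hn
  rw [← heq] at hdmem
  obtain ⟨x, hx⟩ := hdmem
  exact ⟨x, hx⟩


/-- over `ZMod 2`, a symmetric double sum with zero diagonal vanishes. -/
lemma sum_sym_eq_zero {W : Type*} [DecidableEq W] (s : Finset W) (f : W → W → ZMod 2)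
    (hsym : ∀ u v, f u v = f v u) (hdiag : ∀ v, f v v = 0) :
    ∑ v ∈ s, ∑ u ∈ s, f v u = 0 := by
  rw [← Finset.sum_product']
  apply Finset.sum_involution (fun p _ => (p.2, p.1))
  · intro p _
    rw [show f p.2 p.1 = f p.1 p.2 from hsym _ _]
    have h2 : ∀ a : ZMod 2, a + a = 0 := by decide
    exact h2 _
  · intro p _ hf hcon
    have h21 : p.2 = p.1 := congrArg Prod.fst hcon
    apply hf
    rw [h21]; exact hdiag _
  · intro p hp; exact Finset.mk_mem_product (Finset.mem_product.1 hp).2 (Finset.mem_product.1 hp).1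
  · intro p _; rfl



lemma odd_of_cast_one {n : ℕ} (h : (n : ZMod 2) = 1) : Odd n := by
  rcases Nat.even_or_odd n with he | ho
  · exfalso
    obtain ⟨k, hk⟩ := he
    rw [hk] at h
    push_cast at h
    rw [show ((k : ZMod 2) + k) = 0 from zmod2_addself _] at h
    exact one_ne_zero h.symm
  · exact ho

lemma even_of_cast_zero {n : ℕ} (h : (n : ZMod 2) = 0) : Even n := by
  rw [ZMod.natCast_eq_zero_iff] at h
  exact (even_iff_two_dvd).2 h

section gallai
variable {W : Type*} [Fintype W] (G : SimpleGraph W)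

/-- cardinality bridge -/
lemma card_bridge [DecidableEq W] [DecidableRel G.Adj] (S : Set W) [DecidablePred (· ∈ S)]
    (v : W) :
    (((S ∩ G.neighborSet v).ncard : ZMod 2)) =
      ∑ u : W, (if u ∈ S then (if G.Adj v u then (1 : ZMod 2) else 0) else 0) := by
  have hset : (S ∩ G.neighborSet v) =
      ↑(Finset.univ.filter (fun u => u ∈ S ∧ G.Adj v u)) := by
    ext u; simp [SimpleGraph.mem_neighborSet]
  rw [hset, Set.ncard_coe_finset, Finset.card_filter]
  push_cast
  apply Finset.sum_congr rfl
  intro u _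
  by_cases h1 : u ∈ S <;> by_cases h2 : G.Adj v u <;> simp [h1, h2]

/-- Gallai's even/odd partition, whole vertex set version. -/
lemma gallai_univ : ∃ Y : Set W,
    (∀ v ∈ Y, Odd ((Y ∩ G.neighborSet v).ncard)) ∧
    (∀ v ∉ Y, Even ((Yᶜ ∩ G.neighborSet v).ncard)) := by
  classical
  set A : Matrix W W (ZMod 2) := fun v u => if G.Adj v u then 1 else 0 with hA
  have hAsym : ∀ v u, A v u = A u v := by
    intro v u; simp only [hA]
    by_cases h : G.Adj v u
    · simp [h, h.symm]
    · rw [if_neg h, if_neg (fun h' => h (G.adj_symm h'))]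
  have hAdiag : ∀ v, A v v = 0 := by intro v; simp [hA]
  set d : W → ZMod 2 := fun v => ∑ u, A v u with hd
  set M : Matrix W W (ZMod 2) := A + 1 + Matrix.diagonal d with hM
  have hMapp : ∀ (z : W → ZMod 2) (v : W),
      (M *ᵥ z) v = (∑ u, A v u * z u) + z v + d v * z v := by
    intro z v
    show ∑ u, M v u * z u = _
    have : ∀ u, M v u * z u = A v u * z u + (if v = u then z u else 0)
        + (if v = u then d v * z u else 0) := by
      intro u
      simp only [hM, Matrix.add_apply, Matrix.one_apply, Matrix.diagonal_apply]
      by_cases h : v = u <;> simp [h] <;> ring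
    rw [Finset.sum_congr rfl (fun u _ => this u)]
    rw [Finset.sum_add_distrib, Finset.sum_add_distrib, Finset.sum_ite_eq, Finset.sum_ite_eq]
    simp
  -- kernel orthogonality
  have hker : ∀ z, M *ᵥ z = 0 → d ⬝ᵥ z = 0 := by
    intro z hz
    have hzv : ∀ v, (M *ᵥ z) v = 0 := fun v => congrFun hz v
    have hstar : (∑ v, z v) + (∑ v, d v * z v) = 0 := by
      have h1 : ∑ v, z v * (M *ᵥ z) v = 0 := by
        simp [hzv]
      have hexp : ∑ v, z v * (M *ᵥ z) v
          = (∑ v, ∑ u, z v * (A v u * z u)) + ((∑ v, z v) + (∑ v, d v * z v)) := by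
        rw [← Finset.sum_add_distrib, ← Finset.sum_add_distrib]
        apply Finset.sum_congr rfl
        intro v _
        rw [hMapp, mul_add, mul_add, Finset.mul_sum]
        have e1 : z v * z v = z v := zmod2_sq _
        have e2 : z v * (d v * z v) = d v * z v := by
          rw [mul_comm (d v) (z v), ← mul_assoc, e1]
        rw [e1, e2, add_assoc]
      have hzero : (∑ v, ∑ u, z v * (A v u * z u)) = 0 := by
        apply sum_sym_eq_zero
        · intro a b
          rw [hAsym a b]; ring
        · intro v; rw [hAdiag]; ring
      rw [hexp, hzero, zero_add] at h1
      exact h1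
    have h2 : ∑ v, (M *ᵥ z) v = 0 := by simp [hzv]
    have hexp2 : ∑ v, (M *ᵥ z) v
        = (∑ v, ∑ u, A v u * z u) + ((∑ v, z v) + (∑ v, d v * z v)) := by
      rw [← Finset.sum_add_distrib, ← Finset.sum_add_distrib]
      apply Finset.sum_congr rfl
      intro v _
      rw [hMapp]; ring
    rw [hexp2, hstar, add_zero] at h2
    have hswap : (∑ v, ∑ u, A v u * z u) = ∑ u, d u * z u := by
      rw [Finset.sum_comm]
      apply Finset.sum_congr rfl
      intro u _
      rw [← Finset.sum_mul]
      congr 1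
      simp only [hd]
      exact Finset.sum_congr rfl (fun v _ => hAsym v u)
    rw [hswap] at h2
    exact h2
  have hMsym : Mᵀ = M := by
    have hAt : Aᵀ = A := by
      ext v u; exact hAsym u v
    rw [hM, Matrix.transpose_add, Matrix.transpose_add, hAt, Matrix.transpose_one,
      Matrix.diagonal_transpose]
  obtain ⟨x, hx⟩ := exists_solution M hMsym d hker
  refine ⟨{v | x v = 1}, ?_, ?_⟩
  · intro v hv
    have hxv : x v = 1 := hv
    have heq := congrFun hx v
    rw [hMapp, hxv, mul_one] at heq
    have hsum1 : (∑ u, A v u * x u) = 1 := by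
      have := congrArg (· + (1 + d v)) heq
      change (∑ u, A v u * x u) + 1 + d v + (1 + d v) = d v + (1 + d v) at this
      calc (∑ u, A v u * x u)
          = (∑ u, A v u * x u) + 1 + d v + (1 + d v) := by
            rw [add_assoc _ (d v) _, add_comm (d v) (1 + d v), add_assoc 1 (d v) (d v),
              zmod2_addself, add_zero, add_assoc, zmod2_addself, add_zero]
        _ = d v + (1 + d v) := this
        _ = 1 := by
            rw [add_comm 1 (d v), ← add_assoc, zmod2_addself, zero_add]
    apply odd_of_cast_one
    rw [card_bridge]
    have hfix : ∑ u, (if u ∈ ({v | x v = 1} : Set W) then (if G.Adj v u then (1:ZMod 2) else 0) else 0)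
        = ∑ u, A v u * x u := by
      apply Finset.sum_congr rfl
      intro u _
      by_cases h1 : x u = 1
      · simp [Set.mem_setOf_eq, h1, hA]
      · have h0 : x u = 0 := (zmod2_cases (x u)).resolve_right h1
        simp [Set.mem_setOf_eq, h1, h0]
    rw [hfix, hsum1]
  · intro v hv
    have hxv : x v = 0 := by
      rcases zmod2_cases (x v) with h | h
      · exact h
      · exact absurd h hv
    have heq := congrFun hx v
    rw [hMapp, hxv, mul_zero, add_zero, add_zero] at heq
    apply even_of_cast_zero
    rw [card_bridge]
    have : ∑ u, (if u ∈ ({v | x v = 1} : Set W)ᶜ then (if G.Adj v u then (1:ZMod 2) else 0) else 0)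
        = (∑ u, A v u * x u) + (∑ u, A v u) := by
      rw [← Finset.sum_add_distrib]
      apply Finset.sum_congr rfl
      intro u _
      by_cases h1 : x u = 1
      · have : ¬ (u ∈ ({v | x v = 1} : Set W)ᶜ) := by simp [Set.mem_setOf_eq, h1]
        rw [if_neg this, h1, mul_one, zmod2_addself]
      · have h0 : x u = 0 := (zmod2_cases (x u)).resolve_right h1
        have : u ∈ ({v | x v = 1} : Set W)ᶜ := by simp [Set.mem_setOf_eq, h1]
        rw [if_pos this, h0, mul_zero, zero_add]
    rw [this, heq]
    exact zmod2_addself _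
end gallai

lemma cast_one_of_odd {n : ℕ} (h : Odd n) : (n : ZMod 2) = 1 := by
  obtain ⟨k, rfl⟩ := h
  push_cast
  rw [two_mul, zmod2_addself, zero_add]

/-- Handshake: a set inducing all-odd degrees has even size. -/
lemma even_ncard_of_odd_set {V : Type*} [Fintype V] (G : SimpleGraph V) (S : Set V)
    (h : ∀ v ∈ S, Odd ((S ∩ G.neighborSet v).ncard)) : Even S.ncard := by
  classical
  apply even_of_cast_zero
  have hbridge : ∀ v, (((S ∩ G.neighborSet v).ncard : ZMod 2)) =
      ∑ u ∈ S.toFinset, (if G.Adj v u then (1 : ZMod 2) else 0) := by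
    intro v
    have hset : (S ∩ G.neighborSet v) = ↑(S.toFinset.filter (fun u => G.Adj v u)) := by
      ext u; simp [SimpleGraph.mem_neighborSet]
    rw [hset, Set.ncard_coe_finset, Finset.card_filter]
    push_cast
    rfl
  have h1 : ((S.ncard : ZMod 2)) = ∑ v ∈ S.toFinset, (1 : ZMod 2) := by
    rw [Set.ncard_eq_toFinset_card']
    simp
  rw [h1]
  have h2 : ∀ v ∈ S.toFinset, (1 : ZMod 2) = ((S ∩ G.neighborSet v).ncard : ZMod 2) := by
    intro v hv
    rw [cast_one_of_odd (h v (Set.mem_toFinset.1 hv))]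
  rw [Finset.sum_congr rfl h2]
  rw [Finset.sum_congr rfl (fun v _ => hbridge v)]
  apply sum_sym_eq_zero
  · intro a b
    by_cases hab : G.Adj a b
    · rw [if_pos hab, if_pos (G.adj_symm hab)]
    · rw [if_neg hab, if_neg (fun h' => hab (G.adj_symm h'))]
  · intro v; simp

/-- Gallai's even/odd partition for an arbitrary subset. -/
lemma gallai_subset {V : Type*} [Fintype V] (G : SimpleGraph V) (T : Set V) :
    ∃ X Y : Set V, X ∪ Y = T ∧ Disjoint X Y ∧
      (∀ v ∈ X, Even ((X ∩ G.neighborSet v).ncard)) ∧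
      (∀ v ∈ Y, Odd ((Y ∩ G.neighborSet v).ncard)) := by
  classical
  haveI : Fintype ↥T := Set.Finite.fintype (Set.toFinite T)
  obtain ⟨Y', hodd, heven⟩ := gallai_univ (G.induce T)
  have trans : ∀ (Z : Set ↥T) (a : ↥T),
      (Subtype.val '' Z ∩ G.neighborSet ↑a) =
        Subtype.val '' (Z ∩ (G.induce T).neighborSet a) := by
    intro Z a
    ext u
    constructor
    · rintro ⟨⟨b, hb, rfl⟩, hadj⟩
      exact ⟨b, ⟨hb, hadj⟩, rfl⟩
    · rintro ⟨b, ⟨hb, hadj⟩, rfl⟩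
      exact ⟨⟨b, hb, rfl⟩, hadj⟩
  refine ⟨Subtype.val '' (Y'ᶜ), Subtype.val '' Y', ?_, ?_, ?_, ?_⟩
  · rw [← Set.image_union, Set.compl_union_self, Set.image_univ, Subtype.range_val]
  · exact (Set.disjoint_image_iff Subtype.val_injective).2 disjoint_compl_left
  · rintro v ⟨a, ha, rfl⟩
    rw [trans, Set.ncard_image_of_injective _ Subtype.val_injective]
    exact heven a ha
  · rintro v ⟨a, ha, rfl⟩
    rw [trans, Set.ncard_image_of_injective _ Subtype.val_injective]
    exact hodd a ha

section assemble
variable {V : Type*} [Fintype V] (G : SimpleGraph V)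

lemma card_cross (V1 V2 P Q : Set V) (hP : P ⊆ V1) (hQ : Q ⊆ V2) (hdisj : Disjoint V1 V2)
    (hjoin : ∀ u ∈ V1, ∀ w ∈ V2, G.Adj u w) (v : V) (hv : v ∈ V1) :
    ((P ∪ Q) ∩ G.neighborSet v).ncard = (P ∩ G.neighborSet v).ncard + Q.ncard := by
  have hQN : Q ∩ G.neighborSet v = Q := by
    apply Set.inter_eq_self_of_subset_left
    intro q hq
    exact hjoin v hv q (hQ hq)
  rw [Set.union_inter_distrib_right, hQN]
  apply Set.ncard_union_eq
  · exact (hdisj.mono (le_trans Set.inter_subset_left hP) hQ)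
  · exact Set.toFinite _
  · exact Set.toFinite _

/-- Main assembly: if `T1 ⊆ V1`, `T2 ⊆ V2` both have odd size, `T1 ∪ T2` splits
into two odd sets. -/
lemma assemble (V1 V2 T1 T2 : Set V) (hT1 : T1 ⊆ V1) (hT2 : T2 ⊆ V2)
    (hdisj : Disjoint V1 V2) (hjoin : ∀ u ∈ V1, ∀ w ∈ V2, G.Adj u w)
    (h1odd : Odd T1.ncard) (h2odd : Odd T2.ncard) :
    ∃ A B : Set V, Disjoint A B ∧ A ∪ B = T1 ∪ T2 ∧ G.IsOddSet A ∧ G.IsOddSet B := by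
  obtain ⟨X1, Y1, hu1, hd1, he1, ho1⟩ := gallai_subset G T1
  obtain ⟨X2, Y2, hu2, hd2, he2, ho2⟩ := gallai_subset G T2
  have hX1 : X1 ⊆ V1 := le_trans (le_trans Set.subset_union_left hu1.le) hT1
  have hY1 : Y1 ⊆ V1 := le_trans (le_trans Set.subset_union_right hu1.le) hT1
  have hX2 : X2 ⊆ V2 := le_trans (le_trans Set.subset_union_left hu2.le) hT2
  have hY2 : Y2 ⊆ V2 := le_trans (le_trans Set.subset_union_right hu2.le) hT2
  have hjoin' : ∀ u ∈ V2, ∀ w ∈ V1, G.Adj u w := fun u hu w hw => (hjoin w hw u hu).symm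
  -- parities
  have hY1even : Even Y1.ncard := even_ncard_of_odd_set G Y1 ho1
  have hY2even : Even Y2.ncard := even_ncard_of_odd_set G Y2 ho2
  have hsum1 : X1.ncard + Y1.ncard = T1.ncard := by
    rw [← hu1]; exact (Set.ncard_union_eq hd1 (Set.toFinite _) (Set.toFinite _)).symm
  have hsum2 : X2.ncard + Y2.ncard = T2.ncard := by
    rw [← hu2]; exact (Set.ncard_union_eq hd2 (Set.toFinite _) (Set.toFinite _)).symm
  have hX1odd : Odd X1.ncard := by
    rcases Nat.even_or_odd X1.ncard with h | h
    · exfalso; rw [Nat.odd_iff] at h1odd; rw [Nat.even_iff] at h hY1even; omega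
    · exact h
  have hX2odd : Odd X2.ncard := by
    rcases Nat.even_or_odd X2.ncard with h | h
    · exfalso; rw [Nat.odd_iff] at h2odd; rw [Nat.even_iff] at h hY2even; omega
    · exact h
  refine ⟨X1 ∪ X2, Y1 ∪ Y2, ?_, ?_, ?_, ?_⟩
  · apply Set.disjoint_union_left.2
    constructor
    · apply Set.disjoint_union_right.2
      exact ⟨hd1, hdisj.mono hX1 hY2⟩
    · apply Set.disjoint_union_right.2
      exact ⟨(hdisj.mono hY1 hX2).symm, hd2⟩
  · rw [Set.union_union_union_comm, hu1, hu2]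
  · rintro v (hv | hv)
    · rw [card_cross G V1 V2 X1 X2 hX1 hX2 hdisj hjoin v (hX1 hv)]
      exact (he1 v hv).add_odd hX2odd
    · rw [Set.union_comm, card_cross G V2 V1 X2 X1 hX2 hX1 hdisj.symm hjoin' v (hX2 hv)]
      exact (he2 v hv).add_odd hX1odd
  · rintro v (hv | hv)
    · rw [card_cross G V1 V2 Y1 Y2 hY1 hY2 hdisj hjoin v (hY1 hv)]
      exact (ho1 v hv).add_even hY2even
    · rw [Set.union_comm, card_cross G V2 V1 Y2 Y1 hY2 hY1 hdisj.symm hjoin' v (hY2 hv)]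
      exact (ho2 v hv).add_even hY1even
end assemble

/-- If a finite graph `G` on an even number of vertices admits a join, then its vertex set
can be partitioned into three (possibly empty) odd sets; in particular χ_odd(G) ≤ 3. -/
theorem stmt2 {V : Type*} [Fintype V] (G : SimpleGraph V)
    (heven : Even (Fintype.card V))
    (V1 V2 : Set V) (h1 : V1.Nonempty) (h2 : V2.Nonempty)
    (hdisj : Disjoint V1 V2) (hcover : V1 ∪ V2 = Set.univ)
    (hjoin : ∀ u ∈ V1, ∀ w ∈ V2, G.Adj u w) :
    ∃ A B C : Set V, Disjoint A B ∧ Disjoint A C ∧ Disjoint B C ∧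
      A ∪ B ∪ C = Set.univ ∧ G.IsOddSet A ∧ G.IsOddSet B ∧ G.IsOddSet C := by
  classical
  have hcards : V1.ncard + V2.ncard = Fintype.card V := by
    rw [← Nat.card_eq_fintype_card, ← Set.ncard_univ, ← hcover]
    exact (Set.ncard_union_eq hdisj (Set.toFinite _) (Set.toFinite _)).symm
  rcases Nat.even_or_odd V1.ncard with hpar | hpar
  · -- both even: peel off an edge {u, w} across the join
    obtain ⟨u, hu⟩ := h1
    obtain ⟨w, hw⟩ := h2
    have huw : u ≠ w := fun h => Set.disjoint_left.1 hdisj hu (h ▸ hw)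
    have hpos1 : 0 < V1.ncard := (Set.ncard_pos (Set.toFinite _)).2 ⟨u, hu⟩
    have hpos2 : 0 < V2.ncard := (Set.ncard_pos (Set.toFinite _)).2 ⟨w, hw⟩
    have hpar2 : Even V2.ncard := by
      rw [Nat.even_iff] at hpar ⊢
      rw [Nat.even_iff] at heven
      omega
    have hc1 : (V1 \ {u}).ncard = V1.ncard - 1 := Set.ncard_diff_singleton_of_mem hu
    have hc2 : (V2 \ {w}).ncard = V2.ncard - 1 := Set.ncard_diff_singleton_of_mem hw
    have ho1 : Odd (V1 \ {u}).ncard := by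
      rw [hc1, Nat.odd_iff]; rw [Nat.even_iff] at hpar; omega
    have ho2 : Odd (V2 \ {w}).ncard := by
      rw [hc2, Nat.odd_iff]; rw [Nat.even_iff] at hpar2; omega
    obtain ⟨A, B, hAB, hABu, hAodd, hBodd⟩ :=
      assemble G V1 V2 (V1 \ {u}) (V2 \ {w}) Set.diff_subset Set.diff_subset hdisj hjoin ho1 ho2
    have hCsub : ∀ x ∈ ({u, w} : Set V), x ∉ (V1 \ {u}) ∪ (V2 \ {w}) := by
      rintro x (rfl | rfl)
      · rintro (⟨_, hx⟩ | ⟨hx, _⟩)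
        · exact hx rfl
        · exact Set.disjoint_left.1 hdisj hu hx
      · rintro (⟨hx, _⟩ | ⟨_, hx⟩)
        · exact Set.disjoint_left.1 hdisj hx hw
        · exact hx rfl
    refine ⟨A, B, {u, w}, hAB, ?_, ?_, ?_, hAodd, hBodd, ?_⟩
    · rw [Set.disjoint_right]
      intro x hx hxA
      exact hCsub x hx (hABu ▸ Set.mem_union_left _ hxA)
    · rw [Set.disjoint_right]
      intro x hx hxB
      exact hCsub x hx (hABu ▸ Set.mem_union_right _ hxB)
    · rw [hABu]
      ext x
      simp only [Set.mem_union, Set.mem_diff, Set.mem_singleton_iff, Set.mem_insert_iff,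
        Set.mem_univ, iff_true]
      have hx : x ∈ V1 ∪ V2 := hcover ▸ Set.mem_univ x
      by_cases hxu : x = u
      · right; left; exact hxu
      · by_cases hxw : x = w
        · right; right; exact hxw
        · rcases hx with hx | hx
          · left; left; exact ⟨hx, hxu⟩
          · left; right; exact ⟨hx, hxw⟩
    · have key : ∀ a b : V, G.Adj a b → ({a, b} : Set V) ∩ G.neighborSet a = {b} := by
        intro a b hadj
        ext x
        simp only [Set.mem_inter_iff, Set.mem_insert_iff, Set.mem_singleton_iff,
          SimpleGraph.mem_neighborSet]
        constructor
        · rintro ⟨rfl | rfl, h⟩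
          · exact absurd h (G.irrefl)
          · rfl
        · rintro rfl
          exact ⟨Or.inr rfl, hadj⟩
      intro v hv
      have hv' : v = u ∨ v = w := hv
      rcases hv' with h | h
      · rw [h, key u w (hjoin u hu w hw), Set.ncard_singleton]
        exact odd_one
      · rw [h, Set.pair_comm, key w u (hjoin u hu w hw).symm, Set.ncard_singleton]
        exact odd_one
  · -- both odd
    have hpar2 : Odd V2.ncard := by
      rw [Nat.odd_iff] at hpar ⊢
      rw [Nat.even_iff] at heven
      omega
    obtain ⟨A, B, hAB, hABu, hAodd, hBodd⟩ :=
      assemble G V1 V2 V1 V2 le_rfl le_rfl hdisj hjoin hpar hpar2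
    refine ⟨A, B, ∅, hAB, Set.disjoint_empty A, Set.disjoint_empty B, ?_, hAodd, hBodd, ?_⟩
    · rw [Set.union_empty, hABu, hcover]
    · intro v hv
      exact absurd hv (Set.notMem_empty v)
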